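/- Let M be a finite MDP with discount γ ∈ (0,1), and let π and π_β be policies such that d^{π_β}(s) > 0 and π_β(a|s) > 0 for all s ∈ S, a ∈ A. For ρ : S → ℝ and f : S → ℝ define L(ρ, f) = γ·E_{s ∼ d^{π_β}, a ∼ π_β(·|s), s' ∼ T(·|s,a)}[ (ρ(s)·π(a|s)/π_β(a|s) − ρ(s'))·f(s') ] + (1−γ)·E_{s₀ ∼ d₀}[ (1 − ρ(s₀))·f(s₀) ]. Then L(ρ, f) = 0 for all functions f : S → ℝ if and only if ρ(s) = ρ^π(s) = d^π(s)/d^{π_β}(s) for all s ∈ S. -/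

import Mathlib

open Finset

/-- Time-indexed state marginal `d_t^π(s) = P_{p_π}(s_t = s)` of the Markov chain
induced by policy `π` in a finite MDP with initial distribution `d0` and transition
kernel `T`. -/
noncomputable def stateDist {S A : Type} [Fintype S] [Fintype A]
    (d0 : S → ℝ) (T : S → A → S → ℝ) (π : S → A → ℝ) : ℕ → S → ℝ
  | 0, s => d0 s
  | t + 1, s' => ∑ s, ∑ a, stateDist d0 T π t s * π s a * T s a s'

/-- Normalized discounted state occupancy `d^π(s) = (1−γ) Σ_{t=0}^∞ γ^t P_{p_π}(s_t = s)`. -/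
noncomputable def occ {S A : Type} [Fintype S] [Fintype A]
    (d0 : S → ℝ) (T : S → A → S → ℝ) (π : S → A → ℝ) (γ : ℝ) (s : S) : ℝ :=
  (1 - γ) * ∑' t : ℕ, γ ^ t * stateDist d0 T π t s

section Aux
variable {S A : Type} [Fintype S] [Fintype A]
variable (d0 : S → ℝ) (T : S → A → S → ℝ) (p : S → A → ℝ) (γ : ℝ)

lemma stateDist_nonneg (hd00 : ∀ s, 0 ≤ d0 s) (hT0 : ∀ s a s', 0 ≤ T s a s')
    (hp0 : ∀ s a, 0 ≤ p s a) : ∀ t s, 0 ≤ stateDist d0 T p t s := by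
  intro t
  induction t with
  | zero => exact hd00
  | succ t ih =>
    intro s'
    simp only [stateDist]
    exact Finset.sum_nonneg fun s _ => Finset.sum_nonneg fun a _ =>
      mul_nonneg (mul_nonneg (ih s) (hp0 s a)) (hT0 s a s')

lemma stateDist_sum (hd01 : ∑ s, d0 s = 1) (hT1 : ∀ s a, ∑ s', T s a s' = 1)
    (hp1 : ∀ s, ∑ a, p s a = 1) : ∀ t, ∑ s, stateDist d0 T p t s = 1 := by
  intro t
  induction t with
  | zero => exact hd01
  | succ t ih =>
    simp only [stateDist]
    rw [Finset.sum_comm]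
    calc ∑ s, ∑ s', ∑ a, stateDist d0 T p t s * p s a * T s a s'
        = ∑ s, ∑ a, ∑ s', stateDist d0 T p t s * p s a * T s a s' :=
          Finset.sum_congr rfl fun s _ => Finset.sum_comm
      _ = ∑ s, ∑ a, stateDist d0 T p t s * p s a := by
          refine Finset.sum_congr rfl fun s _ => Finset.sum_congr rfl fun a _ => ?_
          rw [← Finset.mul_sum, hT1, mul_one]
      _ = ∑ s, stateDist d0 T p t s := by
          refine Finset.sum_congr rfl fun s _ => ?_
          rw [← Finset.mul_sum, hp1, mul_one]
      _ = 1 := ih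

lemma stateDist_summable (hγ0 : 0 < γ) (hγ1 : γ < 1)
    (hd00 : ∀ s, 0 ≤ d0 s) (hd01 : ∑ s, d0 s = 1)
    (hT0 : ∀ s a s', 0 ≤ T s a s') (hT1 : ∀ s a, ∑ s', T s a s' = 1)
    (hp0 : ∀ s a, 0 ≤ p s a) (hp1 : ∀ s, ∑ a, p s a = 1) (s : S) :
    Summable (fun t => γ ^ t * stateDist d0 T p t s) := by
  refine Summable.of_nonneg_of_le (fun t => mul_nonneg (pow_nonneg hγ0.le t)
    (stateDist_nonneg d0 T p hd00 hT0 hp0 t s)) (fun t => ?_)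
    (summable_geometric_of_lt_one hγ0.le hγ1)
  have hle : stateDist d0 T p t s ≤ 1 := by
    rw [← stateDist_sum d0 T p hd01 hT1 hp1 t]
    exact Finset.single_le_sum (fun i _ => stateDist_nonneg d0 T p hd00 hT0 hp0 t i)
      (Finset.mem_univ s)
  calc γ ^ t * stateDist d0 T p t s ≤ γ ^ t * 1 :=
        mul_le_mul_of_nonneg_left hle (pow_nonneg hγ0.le t)
    _ = γ ^ t := mul_one _

lemma occ_bellman (hγ0 : 0 < γ) (hγ1 : γ < 1)
    (hd00 : ∀ s, 0 ≤ d0 s) (hd01 : ∑ s, d0 s = 1)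
    (hT0 : ∀ s a s', 0 ≤ T s a s') (hT1 : ∀ s a, ∑ s', T s a s' = 1)
    (hp0 : ∀ s a, 0 ≤ p s a) (hp1 : ∀ s, ∑ a, p s a = 1) (s' : S) :
    occ d0 T p γ s' =
      (1 - γ) * d0 s' + γ * ∑ s, ∑ a, occ d0 T p γ s * p s a * T s a s' := by
  have hsum := fun s => stateDist_summable d0 T p γ hγ0 hγ1 hd00 hd01 hT0 hT1 hp0 hp1 s
  have hsum2 : ∀ s a, Summable (fun t => (γ ^ t * stateDist d0 T p t s) * p s a * T s a s') :=
    fun s a => ((hsum s).mul_right _).mul_right _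
  have key : ∑' t : ℕ, γ ^ t * stateDist d0 T p t s'
      = d0 s' + γ * ∑ s, ∑ a, (∑' t : ℕ, γ ^ t * stateDist d0 T p t s) * p s a * T s a s' := by
    rw [Summable.tsum_eq_zero_add (hsum s')]
    congr 1
    · simp [stateDist]
    have hstep : ∀ t : ℕ, γ ^ (t + 1) * stateDist d0 T p (t + 1) s'
        = γ * ∑ s, ∑ a, (γ ^ t * stateDist d0 T p t s) * p s a * T s a s' := by
      intro t
      simp only [stateDist]
      rw [Finset.mul_sum, Finset.mul_sum]
      refine Finset.sum_congr rfl fun s _ => ?_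
      rw [Finset.mul_sum, Finset.mul_sum]
      refine Finset.sum_congr rfl fun a _ => ?_
      ring
    calc ∑' t : ℕ, γ ^ (t + 1) * stateDist d0 T p (t + 1) s'
        = ∑' t : ℕ, γ * ∑ s, ∑ a, (γ ^ t * stateDist d0 T p t s) * p s a * T s a s' :=
          tsum_congr hstep
      _ = γ * ∑' t : ℕ, ∑ s, ∑ a, (γ ^ t * stateDist d0 T p t s) * p s a * T s a s' :=
          tsum_mul_left
      _ = γ * ∑ s, ∑ a, (∑' t : ℕ, γ ^ t * stateDist d0 T p t s) * p s a * T s a s' := by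
          congr 1
          rw [Summable.tsum_finsetSum (fun s _ => summable_sum (fun a _ => hsum2 s a))]
          refine Finset.sum_congr rfl fun s _ => ?_
          rw [Summable.tsum_finsetSum (fun a _ => hsum2 s a)]
          refine Finset.sum_congr rfl fun a _ => ?_
          rw [← tsum_mul_right, ← tsum_mul_right]
  show (1 - γ) * _ = _
  rw [key, mul_add]
  congr 1
  simp only [occ, Finset.mul_sum]
  refine Finset.sum_congr rfl fun s _ => Finset.sum_congr rfl fun a _ => ?_
  ring

lemma bellman_unique (hγ0 : 0 < γ) (hγ1 : γ < 1)
    (hT0 : ∀ s a s', 0 ≤ T s a s') (hT1 : ∀ s a, ∑ s', T s a s' = 1)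
    (hp0 : ∀ s a, 0 ≤ p s a) (hp1 : ∀ s, ∑ a, p s a = 1)
    (g h : S → ℝ)
    (hg : ∀ s', g s' = (1 - γ) * d0 s' + γ * ∑ s, ∑ a, g s * p s a * T s a s')
    (hh : ∀ s', h s' = (1 - γ) * d0 s' + γ * ∑ s, ∑ a, h s * p s a * T s a s') :
    g = h := by
  set e : S → ℝ := fun s => g s - h s with he
  have hesum : ∀ s', e s' = γ * ∑ s, ∑ a, e s * p s a * T s a s' := by
    intro s'
    have split : ∑ s, ∑ a, e s * p s a * T s a s'
        = (∑ s, ∑ a, g s * p s a * T s a s') - ∑ s, ∑ a, h s * p s a * T s a s' := by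
      rw [← Finset.sum_sub_distrib]
      refine Finset.sum_congr rfl fun s _ => ?_
      rw [← Finset.sum_sub_distrib]
      refine Finset.sum_congr rfl fun a _ => ?_
      show (g s - h s) * _ * _ = _
      ring
    show g s' - h s' = _
    rw [hg, hh, split]
    ring
  have habs : ∀ s', |e s'| ≤ γ * ∑ s, ∑ a, |e s| * p s a * T s a s' := by
    intro s'
    rw [hesum s', abs_mul, abs_of_pos hγ0]
    refine mul_le_mul_of_nonneg_left ?_ hγ0.le
    refine (Finset.abs_sum_le_sum_abs _ _).trans ?_
    refine Finset.sum_le_sum fun s _ => ?_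
    refine (Finset.abs_sum_le_sum_abs _ _).trans ?_
    refine Finset.sum_le_sum fun a _ => ?_
    rw [abs_mul, abs_mul, abs_of_nonneg (hp0 s a), abs_of_nonneg (hT0 s a s')]
  have hSle : ∑ s', |e s'| ≤ γ * ∑ s, |e s| := by
    calc ∑ s', |e s'| ≤ ∑ s', γ * ∑ s, ∑ a, |e s| * p s a * T s a s' :=
          Finset.sum_le_sum fun s' _ => habs s'
      _ = γ * ∑ s', ∑ s, ∑ a, |e s| * p s a * T s a s' := by rw [← Finset.mul_sum]
      _ = γ * ∑ s, |e s| := by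
          congr 1
          rw [Finset.sum_comm]
          refine Finset.sum_congr rfl fun s _ => ?_
          rw [Finset.sum_comm]
          calc ∑ a, ∑ s', |e s| * p s a * T s a s'
              = ∑ a, |e s| * p s a := by
                refine Finset.sum_congr rfl fun a _ => ?_
                simp only [mul_assoc, ← Finset.mul_sum]
                rw [hT1, mul_one]
            _ = |e s| := by rw [← Finset.mul_sum, hp1, mul_one]
  have hS0 : ∑ s', |e s'| = 0 := by
    nlinarith [Finset.sum_nonneg (fun s (_ : s ∈ Finset.univ) => abs_nonneg (e s))]
  funext s
  have h1 : |e s| = 0 :=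
    (Finset.sum_eq_zero_iff_of_nonneg
      (fun s (_ : s ∈ Finset.univ) => abs_nonneg (e s))).mp hS0 s (Finset.mem_univ s)
  have h2 : e s = 0 := abs_eq_zero.mp h1
  linarith [sub_eq_zero.mp h2]

end Aux

/-- **Characterization of the state-marginal importance ratio via the adversarial
functional of Liu et al.** Define
`L(ρ, f) = γ·E_{s∼d^{π_β}, a∼π_β(·|s), s'∼T(·|s,a)}[(ρ(s)·π(a|s)/π_β(a|s) − ρ(s'))·f(s')]
          + (1−γ)·E_{s₀∼d₀}[(1 − ρ(s₀))·f(s₀)]`.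
Then `L(ρ, f) = 0` for all `f : S → ℝ` iff `ρ = ρ^π = d^π/d^{π_β}`. -/


theorem adversarial_ratio_characterization
    {S A : Type} [Fintype S] [Fintype A]
    (d0 : S → ℝ) (T : S → A → S → ℝ) (π πβ : S → A → ℝ) (γ : ℝ)
    (hγ0 : 0 < γ) (hγ1 : γ < 1)
    (hd00 : ∀ s, 0 ≤ d0 s) (hd01 : ∑ s, d0 s = 1)
    (hT0 : ∀ s a s', 0 ≤ T s a s') (hT1 : ∀ s a, ∑ s', T s a s' = 1)
    (hπ0 : ∀ s a, 0 ≤ π s a) (hπ1 : ∀ s, ∑ a, π s a = 1)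
    (hβ0 : ∀ s a, 0 < πβ s a) (hβ1 : ∀ s, ∑ a, πβ s a = 1)
    (hoccβ : ∀ s, 0 < occ d0 T πβ γ s)
    (ρ : S → ℝ) :
    (∀ f : S → ℝ,
      γ * (∑ s, ∑ a, ∑ s', occ d0 T πβ γ s * πβ s a * T s a s' *
          ((ρ s * (π s a / πβ s a) - ρ s') * f s')) +
        (1 - γ) * (∑ s0, d0 s0 * ((1 - ρ s0) * f s0)) = 0) ↔
    (∀ s, ρ s = occ d0 T π γ s / occ d0 T πβ γ s) := by
  set occβ : S → ℝ := occ d0 T πβ γ with hob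
  set occπ : S → ℝ := occ d0 T π γ with hop
  set g : S → ℝ := fun s => ρ s * occβ s with hgdef
  set B : S → ℝ := fun s' => ∑ s, ∑ a, g s * π s a * T s a s' with hBdef
  have hBβ : ∀ s', occβ s' = (1 - γ) * d0 s' + γ * ∑ s, ∑ a, occβ s * πβ s a * T s a s' :=
    occ_bellman d0 T πβ γ hγ0 hγ1 hd00 hd01 hT0 hT1 (fun s a => (hβ0 s a).le) hβ1
  have swap3 : ∀ (F : S → A → S → ℝ),
      ∑ s, ∑ a, ∑ s', F s a s' = ∑ s', ∑ s, ∑ a, F s a s' := by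
    intro F
    rw [show (∑ s, ∑ a, ∑ s', F s a s') = ∑ s, ∑ s', ∑ a, F s a s' from
      Finset.sum_congr rfl fun s _ => Finset.sum_comm]
    exact Finset.sum_comm
  have hL : ∀ f : S → ℝ,
      γ * (∑ s, ∑ a, ∑ s', occβ s * πβ s a * T s a s' *
          ((ρ s * (π s a / πβ s a) - ρ s') * f s')) +
        (1 - γ) * (∑ s0, d0 s0 * ((1 - ρ s0) * f s0))
      = ∑ s', ((1 - γ) * d0 s' + γ * B s' - g s') * f s' := by
    intro f
    rw [swap3]
    rw [Finset.mul_sum, Finset.mul_sum, ← Finset.sum_add_distrib]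
    refine Finset.sum_congr rfl fun s' _ => ?_
    have hIN : ∑ s, ∑ a, occβ s * πβ s a * T s a s' * ((ρ s * (π s a / πβ s a) - ρ s') * f s')
        = B s' * f s' - (ρ s' * f s') * ∑ s, ∑ a, occβ s * πβ s a * T s a s' := by
      have expand : ∀ s a, occβ s * πβ s a * T s a s' * ((ρ s * (π s a / πβ s a) - ρ s') * f s')
          = (g s * π s a * T s a s') * f s'
            - (ρ s' * f s') * (occβ s * πβ s a * T s a s') := by
        intro s a
        have hne : πβ s a ≠ 0 := (hβ0 s a).ne'
        simp only [hgdef]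
        field_simp
      rw [Finset.sum_congr rfl fun s _ => Finset.sum_congr rfl fun a _ => expand s a]
      rw [Finset.sum_congr rfl fun s (_ : s ∈ Finset.univ) => Finset.sum_sub_distrib _ _,
        Finset.sum_sub_distrib]
      congr 1
      · rw [hBdef, Finset.sum_mul]
        exact Finset.sum_congr rfl fun s _ => by rw [Finset.sum_mul]
      · rw [Finset.mul_sum]
        exact Finset.sum_congr rfl fun s _ => by rw [Finset.mul_sum]
    rw [hIN]
    have hD : γ * (∑ s, ∑ a, occβ s * πβ s a * T s a s') = occβ s' - (1 - γ) * d0 s' := by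
      have := hBβ s'; linarith
    linear_combination (-(ρ s' * f s')) * hD
  constructor
  · intro H
    have hgb : ∀ s', g s' = (1 - γ) * d0 s' + γ * ∑ s, ∑ a, g s * π s a * T s a s' := by
      intro x
      classical
      have := H (fun s' => if s' = x then 1 else 0)
      rw [hL] at this
      simp only [mul_ite, mul_one, mul_zero] at this
      rw [Finset.sum_ite_eq' Finset.univ x
        (fun s' => (1 - γ) * d0 s' + γ * B s' - g s'), if_pos (Finset.mem_univ x)] at this
      linarith
    have huniq : g = occπ := by
      refine bellman_unique d0 T π γ hγ0 hγ1 hT0 hT1 hπ0 hπ1 g occπ hgb ?_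
      exact occ_bellman d0 T π γ hγ0 hγ1 hd00 hd01 hT0 hT1 hπ0 hπ1
    intro s
    have : ρ s * occβ s = occπ s := congrFun huniq s
    field_simp [(hoccβ s).ne']
    linarith
  · intro H f
    rw [hL]
    have hg : ∀ s, g s = occπ s := by
      intro s
      show ρ s * occβ s = occπ s
      rw [H s, div_mul_cancel₀ _ (hoccβ s).ne']
    have hπb : ∀ s', occπ s' = (1 - γ) * d0 s' + γ * ∑ s, ∑ a, occπ s * π s a * T s a s' :=
      occ_bellman d0 T π γ hγ0 hγ1 hd00 hd01 hT0 hT1 hπ0 hπ1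
    refine Finset.sum_eq_zero fun s' _ => ?_
    have : B s' = ∑ s, ∑ a, occπ s * π s a * T s a s' := by
      refine Finset.sum_congr rfl fun s _ => Finset.sum_congr rfl fun a _ => ?_
      rw [hg s]
    rw [this, hg s']
    have := hπb s'
    have h0 : (1 - γ) * d0 s' + γ * ∑ s, ∑ a, occπ s * π s a * T s a s' - occπ s' = 0 := by
      linarith
    rw [h0, zero_mul]
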